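/- Let J be a linear complex structure on ℝ^{2n} (a linear endomorphism with J² = −I) and let α > 0 be such that ω₀(Ju,u) ≥ α|u|² for every u ∈ ℝ^{2n}. Then (with J + J₀ invertible) one has ‖(J+J₀)^{-1}(J−J₀)‖ ≤ √(1 − 4α³/(1+α)²). -/

import Mathlib

/- ℝ^{2n} is modeled as ℂⁿ via the identification (q,p) ↦ q + ip, under which the
standard complex structure J₀ becomes multiplication by i, the Euclidean scalar
product is the real part of the Hermitian inner product, and the standard symplectic
form ω₀ is minus the imaginary part of the Hermitian inner product (so that
u·v = ω₀(J₀u, v)). -/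

set_option maxHeartbeats 800000

noncomputable section

/-- ℝ^{2n}, identified with ℂⁿ. -/
abbrev Esp (n : ℕ) := EuclideanSpace ℂ (Fin n)

/-- The standard symplectic form ω₀ on ℝ^{2n} ≅ ℂⁿ. -/
def omega0 {n : ℕ} (u v : Esp n) : ℝ := -((inner ℂ u v : ℂ).im)

/-- The standard complex structure J₀ on ℝ^{2n} ≅ ℂⁿ (multiplication by i),
as a continuous ℝ-linear endomorphism. -/
def Jstd (n : ℕ) : Esp n →L[ℝ] Esp n :=
  (Complex.I • (1 : Esp n →L[ℂ] Esp n)).restrictScalars ℝ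

/-- If `J` is a linear complex structure on ℝ^{2n} and `α > 0`
satisfies `ω₀(Ju,u) ≥ α|u|²` for all `u`, then (J + J₀ being invertible) any
two-sided inverse `K` of `J + J₀` satisfies
`‖(J+J₀)⁻¹ (J−J₀)‖ ≤ √(1 − 4α³/(1+α)²)`. -/
lemma alpha_le_one (α a b s : ℝ) (hα : 0 < α) (ha : 0 < a) (hb : 0 < b)
    (h1 : α * b ≤ s) (h2 : α * a ≤ s) (h3 : s ^ 2 ≤ a * b) : α ≤ 1 := by
  have hs0 : 0 ≤ s := le_trans (by positivity) h1
  have h5 : α ^ 2 * (a * b) ≤ a * b := by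
    nlinarith [mul_le_mul h2 h1 (by positivity) hs0]
  have h6 : α ^ 2 ≤ 1 := by
    by_contra h
    push_neg at h
    nlinarith [mul_pos ha hb]
  nlinarith

lemma c_nonneg (α : ℝ) (hα : 0 < α) (hα1 : α ≤ 1) :
    0 ≤ 1 - 4 * α ^ 3 / (1 + α) ^ 2 := by
  have hpos : (0:ℝ) < (1 + α) ^ 2 := by positivity
  rw [sub_nonneg, div_le_one hpos]
  nlinarith [mul_nonneg (by linarith : (0:ℝ) ≤ 1 - α) (by linarith : (0:ℝ) ≤ 1 + 3 * α),
    mul_nonneg (by linarith : (0:ℝ) ≤ 1 - α) (sq_nonneg α)]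

lemma key_scalar (α a b s : ℝ) (hα : 0 < α) (ha : 0 < a) (hb : 0 < b)
    (h1 : α * b ≤ s) (h2 : α * a ≤ s) (h3 : s ^ 2 ≤ a * b) :
    a + b - 2 * s ≤ (1 - 4 * α ^ 3 / (1 + α) ^ 2) * (a + b + 2 * s) := by
  have hs0 : 0 ≤ s := le_trans (by positivity) h1
  have hα1 : α ≤ 1 := alpha_le_one α a b s hα ha hb h1 h2 h3
  have hpos : (0:ℝ) < (1 + α) ^ 2 := by positivity
  have hform : 1 - 4 * α ^ 3 / (1 + α) ^ 2 = ((1 + α) ^ 2 - 4 * α ^ 3) / (1 + α) ^ 2 := by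
    field_simp
  rw [hform, div_mul_eq_mul_div, le_div_iff₀ hpos]
  have h4 : 0 ≤ (1 - α) * ((2 * α + 1) * (1 + α)) :=
    mul_nonneg (by linarith) (mul_nonneg (by linarith) (by linarith))
  nlinarith [mul_le_mul_of_nonneg_left h1 (sq_nonneg α),
    mul_le_mul_of_nonneg_left h2 (sq_nonneg α), mul_nonneg hs0 h4]

theorem statement2 {n : ℕ} (J : Esp n →L[ℝ] Esp n)
    (hJ2 : ∀ u : Esp n, J (J u) = -u)
    (α : ℝ) (hα : 0 < α)
    (hbound : ∀ u : Esp n, α * ‖u‖ ^ 2 ≤ omega0 (J u) u)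
    (K : Esp n →L[ℝ] Esp n)
    (hK1 : (J + Jstd n).comp K = ContinuousLinearMap.id ℝ (Esp n))
    (hK2 : K.comp (J + Jstd n) = ContinuousLinearMap.id ℝ (Esp n)) :
    ‖K.comp (J - Jstd n)‖ ≤ Real.sqrt (1 - 4 * α ^ 3 / (1 + α) ^ 2) := by
  apply ContinuousLinearMap.opNorm_le_bound _ (Real.sqrt_nonneg _)
  intro x
  obtain ⟨u, hx⟩ : ∃ u, (J + Jstd n) u = x := ⟨K x, ContinuousLinearMap.ext_iff.mp hK1 x⟩
  have hJ0J0 : ∀ w : Esp n, Jstd n (Jstd n w) = -w := by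
    intro w
    show Complex.I • Complex.I • w = -w
    rw [smul_smul, Complex.I_mul_I, neg_one_smul]
  have hanti : (J - Jstd n) ((J + Jstd n) u) = (J + Jstd n) (-(J - Jstd n) u) := by
    simp only [ContinuousLinearMap.sub_apply, ContinuousLinearMap.add_apply, map_add,
      map_sub, map_neg, hJ2, hJ0J0]
    abel
  have hTx : (K.comp (J - Jstd n)) x = -(J - Jstd n) u := by
    have h1 : (K.comp (J - Jstd n)) x = K ((J - Jstd n) ((J + Jstd n) u)) := by rw [hx]; rfl
    rw [h1, hanti]
    exact ContinuousLinearMap.ext_iff.mp hK2 _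
  rw [hTx, norm_neg, ← hx]
  by_cases hu0 : u = 0
  · rw [hu0]
    simp only [map_zero, norm_zero, mul_zero, le_refl]
  have hbpos : (0:ℝ) < ‖u‖ ^ 2 := by
    have := norm_pos_iff.mpr hu0
    positivity
  have hJu0 : J u ≠ 0 := by
    intro h
    have h2 := hJ2 u
    rw [h, map_zero] at h2
    exact hu0 (by simpa using h2.symm)
  have hapos : (0:ℝ) < ‖J u‖ ^ 2 := by
    have := norm_pos_iff.mpr hJu0
    positivity
  have hs1 : α * ‖u‖ ^ 2 ≤ omega0 (J u) u := hbound u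
  have hs2 : α * ‖J u‖ ^ 2 ≤ omega0 (J u) u := by
    have h := hbound (J u)
    have heq : omega0 (J (J u)) (J u) = omega0 (J u) u := by
      rw [hJ2 u]
      show -((inner ℂ (-u) (J u) : ℂ).im) = -((inner ℂ (J u) u : ℂ).im)
      rw [inner_neg_left, ← inner_conj_symm u (J u)]
      simp only [Complex.neg_im, Complex.conj_im, neg_neg]
    rwa [heq] at h
  have hs0 : 0 ≤ omega0 (J u) u := le_trans (by positivity) hs1
  have hrei : (inner ℂ (J u) (Complex.I • u) : ℂ).re = omega0 (J u) u := by
    rw [inner_smul_right]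
    simp only [omega0, Complex.mul_re, Complex.I_re, Complex.I_im]
    ring
  have hn : ‖Complex.I • u‖ = ‖u‖ := by
    rw [norm_smul, Complex.norm_I, one_mul]
  have hsle : omega0 (J u) u ≤ ‖J u‖ * ‖u‖ := by
    rw [← hrei]
    have := @re_inner_le_norm ℂ (Esp n) _ _ _ (J u) (Complex.I • u)
    rw [hn] at this; exact this
  have hs3 : (omega0 (J u) u) ^ 2 ≤ ‖J u‖ ^ 2 * ‖u‖ ^ 2 := by
    have h2 := mul_le_mul hsle hsle hs0 (by positivity)
    calc (omega0 (J u) u) ^ 2 = omega0 (J u) u * omega0 (J u) u := sq _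
      _ ≤ (‖J u‖ * ‖u‖) * (‖J u‖ * ‖u‖) := h2
      _ = ‖J u‖ ^ 2 * ‖u‖ ^ 2 := by ring
  have hIu : Jstd n u = Complex.I • u := rfl
  have hsub : ‖(J - Jstd n) u‖ ^ 2 = ‖J u‖ ^ 2 + ‖u‖ ^ 2 - 2 * omega0 (J u) u := by
    have h := @norm_sub_sq ℂ (Esp n) _ _ _ (J u) (Complex.I • u)
    simp only [RCLike.re_to_complex] at h
    rw [ContinuousLinearMap.sub_apply, hIu, h, hrei, hn]
    ring
  have hadd : ‖(J + Jstd n) u‖ ^ 2 = ‖J u‖ ^ 2 + ‖u‖ ^ 2 + 2 * omega0 (J u) u := by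
    have h := @norm_add_sq ℂ (Esp n) _ _ _ (J u) (Complex.I • u)
    simp only [RCLike.re_to_complex] at h
    rw [ContinuousLinearMap.add_apply, hIu, h, hrei, hn]
    ring
  have hkey := key_scalar α (‖J u‖ ^ 2) (‖u‖ ^ 2) (omega0 (J u) u) hα hapos hbpos hs1 hs2 hs3
  have hsq : ‖(J - Jstd n) u‖ ^ 2
      ≤ (1 - 4 * α ^ 3 / (1 + α) ^ 2) * ‖(J + Jstd n) u‖ ^ 2 := by
    rw [hsub, hadd]; exact hkey
  have hC : 0 ≤ 1 - 4 * α ^ 3 / (1 + α) ^ 2 :=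
    c_nonneg α hα (alpha_le_one α (‖J u‖ ^ 2) (‖u‖ ^ 2) (omega0 (J u) u)
      hα hapos hbpos hs1 hs2 hs3)
  calc ‖(J - Jstd n) u‖ = Real.sqrt (‖(J - Jstd n) u‖ ^ 2) :=
        (Real.sqrt_sq (norm_nonneg _)).symm
    _ ≤ Real.sqrt ((1 - 4 * α ^ 3 / (1 + α) ^ 2) * ‖(J + Jstd n) u‖ ^ 2) :=
        Real.sqrt_le_sqrt hsq
    _ = Real.sqrt (1 - 4 * α ^ 3 / (1 + α) ^ 2) * ‖(J + Jstd n) u‖ := by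
        rw [Real.sqrt_mul hC, Real.sqrt_sq (norm_nonneg _)]
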